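/- For the trinomial model with parameter point θ₀ = (1 − (2/3)φ₀, (1/3)φ₀, (1/3)φ₀), φ₀ ∈ (0,1), expressed in the planar coordinates given by the isometric map M of the simplex plane to ℝ², the Fisher information matrix for one observation is diagonal with entries 3/φ₀ and 3/(φ₀(3−2φ₀)). Consequently, the scaled map √n·I(θ₀)^{1/2} sends the planar image of θ₀ to (0, μ₀) with μ₀ = √(2n)·(1−φ₀)/√(φ₀(3−2φ₀)). -/

import Mathlib

open Real

/-- The trinomial cell probabilities parameterized by planar coordinates `(u, v)`
(the inverse of the isometric map `M` of the simplex plane to `ℝ²`). -/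
noncomputable def cellProb (i : Fin 3) (x : ℝ × ℝ) : ℝ :=
  ![1/3 + Real.sqrt (2/3) * x.2,
    1/3 - x.1 / Real.sqrt 2 - x.2 / Real.sqrt 6,
    1/3 + x.1 / Real.sqrt 2 - x.2 / Real.sqrt 6] i

/-- The standard basis of `ℝ × ℝ`. -/
def e : Fin 2 → ℝ × ℝ := ![(1, 0), (0, 1)]

/-- The Fisher information matrix of the trinomial model at planar coordinates `x`,
`I(x)ⱼₖ = Σᵢ (∂ⱼ pᵢ)(∂ₖ pᵢ) / pᵢ`. -/
noncomputable def fisher (x : ℝ × ℝ) : Matrix (Fin 2) (Fin 2) ℝ :=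
  fun j k => ∑ i : Fin 3,
    (fderiv ℝ (cellProb i) x (e j)) * (fderiv ℝ (cellProb i) x (e k)) / cellProb i x

lemma fderiv_affine (a b c : ℝ) (p v : ℝ × ℝ) :
    fderiv ℝ (fun x : ℝ × ℝ => c + a * x.1 + b * x.2) p v = a * v.1 + b * v.2 := by
  have h : HasFDerivAt (fun x : ℝ × ℝ => c + a * x.1 + b * x.2)
      (a • (ContinuousLinearMap.fst ℝ ℝ ℝ) + b • (ContinuousLinearMap.snd ℝ ℝ ℝ)) p := by
    have h1 : HasFDerivAt (fun x : ℝ × ℝ => x.1) (ContinuousLinearMap.fst ℝ ℝ ℝ) p :=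
      hasFDerivAt_fst
    have h2 : HasFDerivAt (fun x : ℝ × ℝ => x.2) (ContinuousLinearMap.snd ℝ ℝ ℝ) p :=
      hasFDerivAt_snd
    have := ((h1.const_mul a).add (h2.const_mul b)).const_add c
    exact this.congr_of_eventuallyEq (Filter.Eventually.of_forall fun x => by simp; ring)
  rw [h.fderiv]; simp

noncomputable def A : Fin 3 → ℝ := ![0, -(Real.sqrt 2)⁻¹, (Real.sqrt 2)⁻¹]
noncomputable def B : Fin 3 → ℝ := ![Real.sqrt (2/3), -(Real.sqrt 6)⁻¹, -(Real.sqrt 6)⁻¹]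

lemma fderiv_cellProb (i : Fin 3) (p v : ℝ × ℝ) :
    fderiv ℝ (cellProb i) p v = A i * v.1 + B i * v.2 := by
  fin_cases i
  · show fderiv ℝ (cellProb 0) p v = A 0 * v.1 + B 0 * v.2
    rw [show cellProb 0 = fun x : ℝ × ℝ => (1/3 : ℝ) + A 0 * x.1 + B 0 * x.2 from
      funext fun x => by simp [cellProb, A, B]; try ring, fderiv_affine]
  · show fderiv ℝ (cellProb 1) p v = A 1 * v.1 + B 1 * v.2
    rw [show cellProb 1 = fun x : ℝ × ℝ => (1/3 : ℝ) + A 1 * x.1 + B 1 * x.2 from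
      funext fun x => by simp [cellProb, A, B]; try ring, fderiv_affine]
  · show fderiv ℝ (cellProb 2) p v = A 2 * v.1 + B 2 * v.2
    rw [show cellProb 2 = fun x : ℝ × ℝ => (1/3 : ℝ) + A 2 * x.1 + B 2 * x.2 from
      funext fun x => by simp [cellProb, A, B]; try ring, fderiv_affine]

theorem stmt_17 (φ₀ : ℝ) (hφ : φ₀ ∈ Set.Ioo (0:ℝ) 1) (n : ℕ) (hn : 0 < n) :
    fisher (0, Real.sqrt (2/3) * (1 - φ₀))
        = !![3 / φ₀, 0; 0, 3 / (φ₀ * (3 - 2 * φ₀))] ∧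
    Real.sqrt n * Real.sqrt (3 / (φ₀ * (3 - 2 * φ₀))) * (Real.sqrt (2/3) * (1 - φ₀))
        = Real.sqrt (2 * n) * (1 - φ₀) / Real.sqrt (φ₀ * (3 - 2 * φ₀)) := by
  obtain ⟨hφ0, hφ1⟩ := hφ
  have hφ0' : φ₀ ≠ 0 := ne_of_gt hφ0
  have h3 : (0:ℝ) < 3 - 2 * φ₀ := by linarith
  have h3' : (3:ℝ) - 2 * φ₀ ≠ 0 := ne_of_gt h3
  have s2 : Real.sqrt 2 * Real.sqrt 2 = 2 := Real.mul_self_sqrt (by norm_num)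
  have s6 : Real.sqrt 6 * Real.sqrt 6 = 6 := Real.mul_self_sqrt (by norm_num)
  have s23 : Real.sqrt (2/3) * Real.sqrt (2/3) = 2/3 := Real.mul_self_sqrt (by norm_num)
  have s2ne : Real.sqrt 2 ≠ 0 := by positivity
  have s6ne : Real.sqrt 6 ≠ 0 := by positivity
  have s3ne : Real.sqrt 3 ≠ 0 := by positivity
  have s9 : Real.sqrt 9 = 3 := by
    rw [show (9:ℝ) = 3^2 by norm_num, Real.sqrt_sq (by norm_num)]
  have s236 : Real.sqrt (2/3) = Real.sqrt 6 / 3 := by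
    rw [show (2/3:ℝ) = 6/9 by norm_num, Real.sqrt_div (by norm_num), s9]
  set x₀ : ℝ × ℝ := (0, Real.sqrt (2/3) * (1 - φ₀)) with hx₀
  have hp0 : cellProb 0 x₀ = 1 - 2/3 * φ₀ := by
    simp only [cellProb, hx₀, Matrix.cons_val_zero]
    rw [show Real.sqrt (2/3) * (Real.sqrt (2/3) * (1 - φ₀))
        = (Real.sqrt (2/3) * Real.sqrt (2/3)) * (1 - φ₀) by ring, s23]
    ring
  have key : Real.sqrt (2/3) * (1 - φ₀) / Real.sqrt 6 = (1 - φ₀) / 3 := by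
    rw [s236]; field_simp
  have hp1 : cellProb 1 x₀ = φ₀ / 3 := by
    simp only [cellProb, hx₀, Matrix.cons_val_one, Matrix.head_cons, Matrix.cons_val_zero]
    rw [zero_div, key]; ring
  have hp2 : cellProb 2 x₀ = φ₀ / 3 := by
    show 1/3 + (0:ℝ)/Real.sqrt 2 - Real.sqrt (2/3)*(1-φ₀)/Real.sqrt 6 = φ₀/3
    rw [zero_div, key]; ring
  constructor
  · ext j k
    fin_cases j <;> fin_cases k <;>
      simp only [fisher, Fin.sum_univ_three, fderiv_cellProb, e, A, B, hp0, hp1, hp2,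
        Matrix.cons_val_zero, Matrix.cons_val_one, Matrix.head_cons, Matrix.cons_val',
        Matrix.cons_val_fin_one, Matrix.empty_val', Matrix.of_apply, Fin.zero_eta, Fin.mk_one, Matrix.cons_val_two, Matrix.cons_val, Matrix.tail_cons] <;>
      field_simp <;> ring_nf <;>
      rw [show Real.sqrt 2 ^ 2 = 2 from by rw [sq, s2]] <;> try ring
      <;> (rw [show Real.sqrt (2/3) ^ 2 = 2/3 from by rw [sq, s23], show Real.sqrt 6 ^ 2 = 6 from by rw [sq, s6]]; ring)
  · have hD : (0:ℝ) < φ₀ * (3 - 2 * φ₀) := by positivity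
    have sDne : Real.sqrt (φ₀ * (3 - 2 * φ₀)) ≠ 0 := by positivity
    rw [Real.sqrt_div (by norm_num : (0:ℝ) ≤ 3),
        show (2/3:ℝ) = 2/3 from rfl,
        Real.sqrt_div (by norm_num : (0:ℝ) ≤ 2) 3,
        Real.sqrt_mul (by norm_num : (0:ℝ) ≤ 2)]
    field_simp
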